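/- Let Y = Σ_{j=1}^K X_jB*_j + E with X_j ∈ ℝ^{n×p_j}, B*_j ∈ ℝ^{p_j×q}, E ∈ ℝ^{n×q}. Fix k, let S_k ∈ ℝ^{n×p_k} be such that both S_kᵀS_k and S_kᵀX_k are invertible, and set P_k = S_k(S_kᵀS_k)⁻¹S_kᵀ. Given any initial estimates B̂_j^n ∈ ℝ^{p_j×q}, define the de-biased estimator B̂_k = B̂_k^n + (S_kᵀX_k)⁻¹S_kᵀ(Y − Σ_{j=1}^K X_jB̂_j^n) and the remainder Rem_k = P_k Σ_{j≠k} X_j(B̂_j^n − B*_j). Then P_kX_k(B̂_k − B*_k) = P_kE − Rem_k. -/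

import Mathlib

open Matrix

noncomputable def frobInner {m n : ℕ} (A B : Matrix (Fin m) (Fin n) ℝ) : ℝ := (Aᵀ * B).trace

noncomputable def frobNorm {m n : ℕ} (A : Matrix (Fin m) (Fin n) ℝ) : ℝ := Real.sqrt (Aᵀ * A).trace

noncomputable def nucNorm {m n : ℕ} (A : Matrix (Fin m) (Fin n) ℝ) : ℝ :=
  (((Matrix.posSemidef_conjTranspose_mul_self A).1.eigenvectorUnitary : Matrix (Fin n) (Fin n) ℝ) *
    Matrix.diagonal ((RCLike.ofReal : ℝ → ℝ) ∘ (Real.sqrt ·) ∘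
      (Matrix.posSemidef_conjTranspose_mul_self A).1.eigenvalues) *
    ((star (Matrix.posSemidef_conjTranspose_mul_self A).1.eigenvectorUnitary :
      unitary (Matrix (Fin n) (Fin n) ℝ)) : Matrix (Fin n) (Fin n) ℝ)).trace

noncomputable def opNorm {m n : ℕ} (A : Matrix (Fin m) (Fin n) ℝ) : ℝ :=
  ‖LinearMap.toContinuousLinearMap (Matrix.toEuclideanLin A)‖

/-- Exact algebraic decomposition of the de-biased group effect: with
`Y = ∑ⱼ XⱼB*ⱼ + E`, score matrix `S_k` with `S_kᵀS_k` and `S_kᵀX_k` invertible,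
`P_k = S_k(S_kᵀS_k)⁻¹S_kᵀ`, de-biased estimator
`B̂_k = B̂_k^n + (S_kᵀX_k)⁻¹S_kᵀ(Y − ∑ⱼ XⱼB̂ⱼ^n)` and remainder
`Rem_k = P_k ∑_{j≠k} Xⱼ(B̂ⱼ^n − B*ⱼ)`, one has `P_kX_k(B̂_k − B*_k) = P_kE − Rem_k`. -/
theorem stmt_12 (n q K : ℕ) (p : Fin K → ℕ) (k : Fin K)
    (X : ∀ j, Matrix (Fin n) (Fin (p j)) ℝ)
    (Bstar Bhatn : ∀ j, Matrix (Fin (p j)) (Fin q) ℝ)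
    (E Y : Matrix (Fin n) (Fin q) ℝ)
    (hY : Y = (∑ j, X j * Bstar j) + E)
    (S : Matrix (Fin n) (Fin (p k)) ℝ)
    (hSS : IsUnit (Sᵀ * S)) (hSX : IsUnit (Sᵀ * X k)) :
    (S * (Sᵀ * S)⁻¹ * Sᵀ) * X k *
        ((Bhatn k + (Sᵀ * X k)⁻¹ * Sᵀ * (Y - ∑ j, X j * Bhatn j)) - Bstar k) =
      (S * (Sᵀ * S)⁻¹ * Sᵀ) * E -
        (S * (Sᵀ * S)⁻¹ * Sᵀ) *
          ∑ j ∈ Finset.univ.erase k, X j * (Bhatn j - Bstar j) := by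

  have hP : (S * (Sᵀ * S)⁻¹ * Sᵀ) * X k * ((Sᵀ * X k)⁻¹ * Sᵀ) = S * (Sᵀ * S)⁻¹ * Sᵀ := by
    have h1 : (Sᵀ * X k) * (Sᵀ * X k)⁻¹ = 1 :=
      Matrix.mul_nonsing_inv _ ((Matrix.isUnit_iff_isUnit_det _).mp hSX)
    calc (S * (Sᵀ * S)⁻¹ * Sᵀ) * X k * ((Sᵀ * X k)⁻¹ * Sᵀ)
        = S * (Sᵀ * S)⁻¹ * ((Sᵀ * X k) * (Sᵀ * X k)⁻¹) * Sᵀ := by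
          simp only [Matrix.mul_assoc]
      _ = S * (Sᵀ * S)⁻¹ * Sᵀ := by rw [h1, Matrix.mul_one]
  set P := S * (Sᵀ * S)⁻¹ * Sᵀ with hPdef
  have h0 : (∑ j, X j * (Bhatn j - Bstar j))
      = X k * (Bhatn k - Bstar k) + ∑ j ∈ Finset.univ.erase k, X j * (Bhatn j - Bstar j) :=
    (Finset.add_sum_erase _ _ (Finset.mem_univ k)).symm
  have hsum : (∑ j, X j * Bstar j) - (∑ j, X j * Bhatn j)
      = - (X k * (Bhatn k - Bstar k)) - ∑ j ∈ Finset.univ.erase k, X j * (Bhatn j - Bstar j) := by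
    have : (∑ j, X j * Bstar j) - (∑ j, X j * Bhatn j) = - ∑ j, X j * (Bhatn j - Bstar j) := by
      rw [← Finset.sum_sub_distrib, ← Finset.sum_neg_distrib]
      refine Finset.sum_congr rfl (fun j _ => ?_)
      rw [Matrix.mul_sub, neg_sub]
    rw [this, h0, neg_add]; abel
  have hD : Y - ∑ j, X j * Bhatn j
      = - (X k * (Bhatn k - Bstar k)) - (∑ j ∈ Finset.univ.erase k, X j * (Bhatn j - Bstar j)) + E := by
    rw [hY]; rw [add_sub_right_comm, hsum]
  calc P * X k * ((Bhatn k + (Sᵀ * X k)⁻¹ * Sᵀ * (Y - ∑ j, X j * Bhatn j)) - Bstar k)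
      = P * X k * (Bhatn k - Bstar k) + P * (Y - ∑ j, X j * Bhatn j) := by
        rw [add_sub_right_comm, Matrix.mul_add]
        congr 1
        calc P * X k * ((Sᵀ * X k)⁻¹ * Sᵀ * (Y - ∑ j, X j * Bhatn j))
            = (P * X k * ((Sᵀ * X k)⁻¹ * Sᵀ)) * (Y - ∑ j, X j * Bhatn j) := by
              simp only [Matrix.mul_assoc]
          _ = P * (Y - ∑ j, X j * Bhatn j) := by rw [hP]
    _ = P * E - P * ∑ j ∈ Finset.univ.erase k, X j * (Bhatn j - Bstar j) := by
        rw [hD]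
        simp only [Matrix.mul_add, Matrix.mul_sub, Matrix.mul_neg, Matrix.mul_assoc]
        abel
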